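/- For each $n$, let $B_1^{(n)}, \ldots, B_n^{(n)}$ be independent Bernoulli random variables with $B_i^{(n)} \sim \mathrm{Bernoulli}(\pi(i/n))$, where $\pi: [0,1] \to [0,1]$ is Lipschitz, and let $\Pi(t) = \frac{1}{t}\int_0^t \pi(u)\,du$. Set $a_n = \lceil (\log n)^2 \rceil$ and $\epsilon_n = 1/\sqrt{\log n}$. Then $\mathbb{P}\left(\max_{a_n \le k \le n} \left|\frac{1}{k}\sum_{i=1}^k B_i^{(n)} - \Pi\left(\frac{k}{n}\right)\right| \le \epsilon_n\right) \to 1$ as $n \to \infty$. -/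

import Mathlib

open scoped ENNReal NNReal
open MeasureTheory ProbabilityTheory Filter Real

lemma exp_mul_le_cosh_add (t y : ℝ) (hy1 : -1 ≤ y) (hy2 : y ≤ 1) :
    Real.exp (t * y) ≤ Real.cosh t + y * Real.sinh t := by
  have h := convexOn_exp.2 (Set.mem_univ (-t)) (Set.mem_univ t)
    (by linarith : (0:ℝ) ≤ (1 - y)/2) (by linarith : (0:ℝ) ≤ (1+y)/2) (by ring)
  simp only [smul_eq_mul] at h
  have e : (1 - y)/2 * (-t) + (1+y)/2 * t = t * y := by ring
  rw [e] at h
  rw [Real.cosh_eq, Real.sinh_eq]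
  exact h.trans_eq (by ring)

lemma bern_mgf_le {Ω : Type*} [MeasurableSpace Ω] (μ : Measure Ω) [IsProbabilityMeasure μ]
    (X : Ω → ℝ) (hX : Measurable X) (hval : ∀ ω, X ω = 0 ∨ X ω = 1)
    {p : ℝ} (hp0 : 0 ≤ p) (hp1 : p ≤ 1) (hp : μ {ω | X ω = 1} = ENNReal.ofReal p)
    (t : ℝ) : mgf X μ t ≤ Real.exp (t * p + t^2/2) := by
  have hXint : Integrable X μ := by
    refine (integrable_const (1:ℝ)).mono' hX.aestronglyMeasurable (ae_of_all _ fun ω => ?_)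
    rcases hval ω with h | h <;> simp [h]
  have hXeq : X = Set.indicator {ω | X ω = 1} (fun _ => (1:ℝ)) := by
    funext ω
    rcases hval ω with h | h <;> simp [Set.indicator, h]
  have hXint_eq : ∫ ω, X ω ∂μ = p := by
    rw [hXeq]
    have hs : MeasurableSet {ω | X ω = 1} := hX (measurableSet_singleton 1)
    rw [MeasureTheory.integral_indicator_const (1:ℝ) hs, measureReal_def, hp]
    simp [ENNReal.toReal_ofReal hp0]
  have hmgf : mgf X μ t = 1 + (Real.exp t - 1) * p := by
    have : (fun ω => Real.exp (t * X ω)) = fun ω => 1 + (Real.exp t - 1) * X ω := by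
      funext ω
      rcases hval ω with h | h <;> simp [h]
    rw [mgf, this, integral_add (integrable_const 1) (hXint.const_mul _),
      integral_const, MeasureTheory.integral_const_mul, hXint_eq]
    simp
  rw [hmgf]
  -- 1 + (e^t - 1) p = e^{tp} ((1-p) e^{-tp} + p e^{t(1-p)})
  have e1 : Real.exp (t*p) * Real.exp (t*(-p)) = 1 := by
    rw [← Real.exp_add]; ring_nf; exact Real.exp_zero
  have e2 : Real.exp (t*p) * Real.exp (t*(1-p)) = Real.exp t := by
    rw [← Real.exp_add]; ring_nf
  have key : 1 + (Real.exp t - 1) * p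
      = Real.exp (t*p) * ((1-p) * Real.exp (t*(-p)) + p * Real.exp (t*(1-p))) := by
    linear_combination (p - 1) * e1 - p * e2
  rw [key]
  have h1 := exp_mul_le_cosh_add t (-p) (by linarith) (by linarith)
  have h2 := exp_mul_le_cosh_add t (1-p) (by linarith) (by linarith)
  have hc : (1-p) * Real.exp (t*(-p)) + p * Real.exp (t*(1-p)) ≤ Real.cosh t := by
    nlinarith
  calc Real.exp (t*p) * ((1-p) * Real.exp (t*(-p)) + p * Real.exp (t*(1-p)))
      ≤ Real.exp (t*p) * Real.cosh t := by
        apply mul_le_mul_of_nonneg_left hc (Real.exp_pos _).le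
    _ ≤ Real.exp (t*p) * Real.exp (t^2/2) := by
        apply mul_le_mul_of_nonneg_left (Real.cosh_le_exp_half_sq t) (Real.exp_pos _).le
    _ = Real.exp (t*p + t^2/2) := (Real.exp_add _ _).symm

lemma bern_sum_tail {Ω : Type*} [MeasurableSpace Ω] (μ : Measure Ω) [IsProbabilityMeasure μ]
    (X : ℕ → Ω → ℝ) (hX : ∀ i, Measurable (X i)) (hval : ∀ i ω, X i ω = 0 ∨ X i ω = 1)
    (hindep : iIndepFun X μ)
    (p : ℕ → ℝ) (s : Finset ℕ) (hp0 : ∀ i ∈ s, 0 ≤ p i) (hp1 : ∀ i ∈ s, p i ≤ 1)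
    (hp : ∀ i ∈ s, μ {ω | X i ω = 1} = ENNReal.ofReal (p i))
    (δ : ℝ) (hδ : 0 ≤ δ) :
    (μ {ω | (s.card : ℝ) * δ ≤ |(∑ i ∈ s, X i ω) - ∑ i ∈ s, p i|}).toReal
      ≤ 2 * Real.exp (-(s.card : ℝ) * δ^2 / 2) := by
  set m : ℝ := ∑ i ∈ s, p i with hm
  set c : ℝ := (s.card : ℝ) with hc
  set S : Ω → ℝ := ∑ i ∈ s, X i with hS
  have hSapp : ∀ ω, S ω = ∑ i ∈ s, X i ω := fun ω => Finset.sum_apply ω s X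
  have hSmeas : Measurable S := by
    have : Measurable fun ω => ∑ i ∈ s, X i ω := Finset.measurable_sum s fun i _ => hX i
    convert this using 1
    exact funext hSapp
  -- integrability of exp(t * S) for any t
  have hint : ∀ t : ℝ, Integrable (fun ω => Real.exp (t * S ω)) μ := by
    intro t
    refine (integrable_const (Real.exp (|t| * c))).mono'
      ((hSmeas.const_mul t).exp).aestronglyMeasurable (ae_of_all _ fun ω => ?_)
    rw [Real.norm_eq_abs, Real.abs_exp, Real.exp_le_exp]
    have h0 : 0 ≤ S ω := by
      rw [hSapp]; exact Finset.sum_nonneg fun i _ => by rcases hval i ω with h|h <;> simp [h]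
    have h1 : S ω ≤ c := by
      rw [hSapp, hc]
      calc ∑ i ∈ s, X i ω ≤ ∑ i ∈ s, 1 :=
            Finset.sum_le_sum fun i _ => by rcases hval i ω with h|h <;> simp [h]
        _ = (s.card : ℝ) := by simp
    calc t * S ω ≤ |t * S ω| := le_abs_self _
      _ = |t| * |S ω| := abs_mul _ _
      _ ≤ |t| * c := by
          apply mul_le_mul_of_nonneg_left _ (abs_nonneg t)
          rw [abs_of_nonneg h0]; exact h1
  -- mgf bound
  have hmgf : ∀ t : ℝ, mgf S μ t ≤ Real.exp (t * m + c * t^2/2) := by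
    intro t
    rw [hS, hindep.mgf_sum hX s]
    calc ∏ i ∈ s, mgf (X i) μ t ≤ ∏ i ∈ s, Real.exp (t * p i + t^2/2) := by
          apply Finset.prod_le_prod (fun i _ => mgf_nonneg)
          intro i hi
          exact bern_mgf_le μ (X i) (hX i) (hval i) (hp0 i hi) (hp1 i hi) (hp i hi) t
      _ = Real.exp (∑ i ∈ s, (t * p i + t^2/2)) := (Real.exp_sum _ _).symm
      _ = Real.exp (t * m + c * t^2/2) := by
          rw [Finset.sum_add_distrib, ← Finset.mul_sum, Finset.sum_const, nsmul_eq_mul, hm, hc]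
          ring_nf
  -- upper tail
  have hup : (μ {ω | m + c * δ ≤ S ω}).toReal ≤ Real.exp (-c * δ^2 / 2) := by
    calc (μ {ω | m + c * δ ≤ S ω}).toReal
        ≤ Real.exp (-δ * (m + c * δ)) * mgf S μ δ :=
          measure_ge_le_exp_mul_mgf (m + c * δ) hδ (hint δ)
      _ ≤ Real.exp (-δ * (m + c * δ)) * Real.exp (δ * m + c * δ^2/2) :=
          mul_le_mul_of_nonneg_left (hmgf δ) (Real.exp_pos _).le
      _ = Real.exp (-c * δ^2 / 2) := by rw [← Real.exp_add]; ring_nf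
  have hlo : (μ {ω | S ω ≤ m - c * δ}).toReal ≤ Real.exp (-c * δ^2 / 2) := by
    calc (μ {ω | S ω ≤ m - c * δ}).toReal
        ≤ Real.exp (-(-δ) * (m - c * δ)) * mgf S μ (-δ) :=
          measure_le_le_exp_mul_mgf (m - c * δ) (neg_nonpos.mpr hδ) (hint (-δ))
      _ ≤ Real.exp (δ * (m - c * δ)) * Real.exp ((-δ) * m + c * (-δ)^2/2) := by
          rw [neg_neg]
          exact mul_le_mul_of_nonneg_left (hmgf (-δ)) (Real.exp_pos _).le
      _ = Real.exp (-c * δ^2 / 2) := by rw [← Real.exp_add]; ring_nf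
  have hsub : {ω | c * δ ≤ |(∑ i ∈ s, X i ω) - m|}
      ⊆ {ω | m + c * δ ≤ S ω} ∪ {ω | S ω ≤ m - c * δ} := by
    intro ω hω
    simp only [Set.mem_setOf_eq] at hω
    rw [← hSapp] at hω
    rcases le_abs.mp hω with h | h
    · left; simp only [Set.mem_setOf_eq]; linarith
    · right; simp only [Set.mem_setOf_eq]; linarith
  have hmeasA : MeasurableSet {ω | m + c * δ ≤ S ω} := measurableSet_le measurable_const hSmeas
  have hmeasB : MeasurableSet {ω | S ω ≤ m - c * δ} := measurableSet_le hSmeas measurable_const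
  have hle : μ {ω | c * δ ≤ |(∑ i ∈ s, X i ω) - m|}
      ≤ μ {ω | m + c * δ ≤ S ω} + μ {ω | S ω ≤ m - c * δ} :=
    (measure_mono hsub).trans (measure_union_le _ _)
  have := ENNReal.toReal_mono (by finiteness) hle
  rw [ENNReal.toReal_add (by finiteness) (by finiteness)] at this
  calc (μ {ω | c * δ ≤ |(∑ i ∈ s, X i ω) - m|}).toReal
      ≤ (μ {ω | m + c * δ ≤ S ω}).toReal + (μ {ω | S ω ≤ m - c * δ}).toReal := this
    _ ≤ 2 * Real.exp (-c * δ^2 / 2) := by linarith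

lemma bias_bound (pf : ℝ → ℝ) (K : NNReal)
    (hpflip : LipschitzOnWith K pf (Set.Icc (0 : ℝ) 1))
    (n k : ℕ) (hk1 : 1 ≤ k) (hkn : k ≤ n) :
    |(∑ i ∈ Finset.Icc 1 k, pf ((i : ℝ) / n))
        - n * ∫ u in (0:ℝ)..((k : ℝ) / n), pf u| ≤ k * K / n := by
  have hn1 : 1 ≤ n := le_trans hk1 hkn
  have hnpos : (0:ℝ) < n := by exact_mod_cast hn1
  have hcont : ContinuousOn pf (Set.Icc 0 1) := hpflip.continuousOn
  have hsubint : ∀ a b : ℝ, 0 ≤ a → a ≤ b → b ≤ 1 → IntervalIntegrable pf volume a b := by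
    intro a b ha hab hb1
    apply (hcont.mono ?_).intervalIntegrable
    rw [Set.uIcc_of_le hab]
    exact Set.Icc_subset_Icc ha hb1
  have hub : ∀ i : ℕ, i ≤ k → ((i:ℝ)/n) ≤ 1 := by
    intro i hi
    rw [div_le_one hnpos]
    exact_mod_cast le_trans hi hkn
  have hmono : ∀ i : ℕ, ((i:ℝ)/n) ≤ ((i+1:ℕ):ℝ)/n := by
    intro i
    gcongr
    exact_mod_cast Nat.le_succ i
  have hadj : ∀ i : ℕ, i < k → IntervalIntegrable pf volume ((i:ℝ)/n) ((i+1:ℕ)/n) := by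
    intro i hi
    exact hsubint _ _ (by positivity) (hmono i) (hub (i+1) hi)
  have key := intervalIntegral.sum_integral_adjacent_intervals
    (a := fun i : ℕ => (i:ℝ)/n) (μ := volume) (f := pf) hadj
  simp only [Nat.cast_zero, zero_div] at key
  have hpiece : ∀ i ∈ Finset.range k,
      |pf (((i+1:ℕ):ℝ)/n) - n * ∫ u in ((i:ℝ)/n)..(((i+1:ℕ):ℝ)/n), pf u| ≤ K / n := by
    intro i hi'
    have hi : i < k := Finset.mem_range.mp hi'
    set a : ℝ := (i:ℝ)/n with ha
    set b : ℝ := ((i+1:ℕ):ℝ)/n with hb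
    have hab : a ≤ b := hmono i
    have hba : b - a = 1/n := by rw [ha, hb]; push_cast; ring
    have ha0 : 0 ≤ a := by positivity
    have hb1 : b ≤ 1 := hub (i+1) hi
    have hbI : b ∈ Set.Icc (0:ℝ) 1 := ⟨le_trans ha0 hab, hb1⟩
    have hintc : IntervalIntegrable (fun _ => pf b) volume a b := intervalIntegrable_const
    have hintp : IntervalIntegrable pf volume a b := hsubint a b ha0 hab hb1
    have heq : pf b - n * ∫ u in a..b, pf u
        = n * ∫ u in a..b, (pf b - pf u) := by
      rw [intervalIntegral.integral_sub hintc hintp, intervalIntegral.integral_const,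
        hba, smul_eq_mul]
      field_simp
    rw [heq, abs_mul, abs_of_pos hnpos]
    have hbnd : ‖∫ u in a..b, (pf b - pf u)‖ ≤ ((K:ℝ)/n) * |b - a| := by
      apply intervalIntegral.norm_integral_le_of_norm_le_const
      intro u hu
      rw [Set.uIoc_of_le hab] at hu
      have huI : u ∈ Set.Icc (0:ℝ) 1 := ⟨le_trans ha0 hu.1.le, le_trans hu.2 hb1⟩
      have hd := hpflip.dist_le_mul b hbI u huI
      rw [Real.dist_eq, Real.dist_eq] at hd
      rw [Real.norm_eq_abs]
      refine hd.trans ?_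
      have hbu : |b - u| ≤ 1/n := by
        rw [abs_of_nonneg (by linarith [hu.2] : (0:ℝ) ≤ b - u)]
        linarith [hu.1, hba]
      calc (K:ℝ) * |b - u| ≤ (K:ℝ) * (1/n) := by
            exact mul_le_mul_of_nonneg_left hbu K.coe_nonneg
        _ = (K:ℝ)/n := by ring
    rw [Real.norm_eq_abs] at hbnd
    have hba' : |b - a| = 1/n := by rw [abs_of_nonneg (by linarith), hba]
    rw [hba'] at hbnd
    calc (n:ℝ) * |∫ u in a..b, (pf b - pf u)|
        ≤ (n:ℝ) * ((K:ℝ)/n * (1/n)) := mul_le_mul_of_nonneg_left hbnd hnpos.le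
      _ = (K:ℝ)/n := by field_simp
  have hsum : ∑ i ∈ Finset.Icc 1 k, pf ((i : ℝ) / n)
      = ∑ i ∈ Finset.range k, pf (((i+1:ℕ):ℝ)/n) := by
    rw [← Finset.Ico_add_one_right_eq_Icc, Finset.sum_Ico_eq_sum_range]
    have : k + 1 - 1 = k := by omega
    rw [this]
    apply Finset.sum_congr rfl
    intro i _
    rw [Nat.add_comm 1 i]
  calc |(∑ i ∈ Finset.Icc 1 k, pf ((i : ℝ) / n))
        - n * ∫ u in (0:ℝ)..((k : ℝ) / n), pf u|
      = |∑ i ∈ Finset.range k,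
          (pf (((i+1:ℕ):ℝ)/n) - n * ∫ u in ((i:ℝ)/n)..(((i+1:ℕ):ℝ)/n), pf u)| := by
        rw [hsum, ← key, Finset.mul_sum, ← Finset.sum_sub_distrib]
    _ ≤ ∑ i ∈ Finset.range k,
          |pf (((i+1:ℕ):ℝ)/n) - n * ∫ u in ((i:ℝ)/n)..(((i+1:ℕ):ℝ)/n), pf u| :=
        Finset.abs_sum_le_sum_abs _ _
    _ ≤ ∑ _i ∈ Finset.range k, (K:ℝ)/n := Finset.sum_le_sum hpiece
    _ = k * K / n := by
        rw [Finset.sum_const, Finset.card_range, nsmul_eq_mul]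
        ring

set_option maxHeartbeats 1000000 in
lemma compl_bound {Ω : Type*} [MeasurableSpace Ω]
    (μ : Measure Ω) [IsProbabilityMeasure μ]
    (B : ℕ → ℕ → Ω → ℝ) (pf : ℝ → ℝ) (K : NNReal)
    (hpfmap : ∀ t ∈ Set.Icc (0 : ℝ) 1, pf t ∈ Set.Icc (0 : ℝ) 1)
    (hpflip : LipschitzOnWith K pf (Set.Icc (0 : ℝ) 1))
    (hmeas : ∀ n i, Measurable (B n i))
    (hval : ∀ n i ω, B n i ω = 0 ∨ B n i ω = 1)
    (hbern : ∀ n : ℕ, ∀ i ∈ Finset.Icc 1 n,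
      μ {ω | B n i ω = 1} = ENNReal.ofReal (pf ((i : ℝ) / n)))
    (hindep : ∀ n : ℕ, iIndepFun (fun i : ℕ => B n i) μ)
    (n : ℕ) (hl : 1 ≤ Real.log n) (hK : 2 * (K:ℝ) * Real.sqrt (Real.log n) ≤ n) :
    μ ({ω | ∀ k : ℕ, ⌈(Real.log n) ^ 2⌉₊ ≤ k → k ≤ n →
        |(∑ i ∈ Finset.Icc 1 k, B n i ω) / k
            - (∫ u in (0 : ℝ)..((k : ℝ) / n), pf u) / ((k : ℝ) / n)|
          ≤ 1 / Real.sqrt (Real.log n)})ᶜ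
      ≤ ENNReal.ofReal (32 * Real.log n * Real.exp (-(Real.log n / 8))) := by
  set ℓ : ℝ := Real.log n with hℓdef
  have hl0 : 0 < ℓ := by linarith
  have hsqrtpos : 0 < Real.sqrt ℓ := Real.sqrt_pos.mpr hl0
  have hsq : Real.sqrt ℓ ^ 2 = ℓ := Real.sq_sqrt hl0.le
  set ε : ℝ := 1 / Real.sqrt ℓ with hεdef
  have hε0 : 0 < ε := by positivity
  set a : ℕ := ⌈ℓ ^ 2⌉₊ with hadef
  have ha1 : 1 ≤ a := Nat.one_le_ceil_iff.mpr (by nlinarith)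
  have hn1 : 1 ≤ n := by
    by_contra h
    push_neg at h
    interval_cases n <;> simp_all [Real.log_zero]
  have hnpos : (0:ℝ) < n := by exact_mod_cast hn1
  set c : ℝ := 1 / (8 * ℓ) with hcdef
  have hc0 : 0 < c := by positivity
  have hc8 : c ≤ 1/8 := by
    rw [hcdef]
    rw [div_le_div_iff₀ (by positivity) (by norm_num)]
    linarith
  -- the bad events
  set A : ℕ → Set Ω := fun k => {ω | ε < |(∑ i ∈ Finset.Icc 1 k, B n i ω) / k
      - (∫ u in (0 : ℝ)..((k : ℝ) / n), pf u) / ((k : ℝ) / n)|} with hAdef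
  have hsub : ({ω | ∀ k : ℕ, a ≤ k → k ≤ n →
      |(∑ i ∈ Finset.Icc 1 k, B n i ω) / k
          - (∫ u in (0 : ℝ)..((k : ℝ) / n), pf u) / ((k : ℝ) / n)| ≤ ε})ᶜ
      ⊆ ⋃ k ∈ Finset.Icc a n, A k := by
    intro ω hω
    simp only [Set.mem_compl_iff, Set.mem_setOf_eq, not_forall] at hω
    obtain ⟨k, hk1, hk2, hk3⟩ := hω
    refine Set.mem_biUnion (Finset.mem_Icc.mpr ⟨hk1, hk2⟩) ?_
    exact not_le.mp hk3
  -- per-k bound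
  have hAk : ∀ k ∈ Finset.Icc a n, μ (A k) ≤ ENNReal.ofReal (2 * Real.exp (-(k:ℝ) * c)) := by
    intro k hk
    rw [Finset.mem_Icc] at hk
    have hk1 : 1 ≤ k := le_trans ha1 hk.1
    have hkn : k ≤ n := hk.2
    have hkpos : (0:ℝ) < k := by exact_mod_cast hk1
    set m : ℝ := ∑ i ∈ Finset.Icc 1 k, pf ((i : ℝ) / n) with hmdef
    set I : ℝ := ∫ u in (0 : ℝ)..((k : ℝ) / n), pf u with hIdef
    have hbias := bias_bound pf K hpflip n k hk1 hkn
    have hPi : I / ((k : ℝ) / n) = (n * I) / k := by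
      rw [div_div_eq_mul_div]
      ring_nf
    have hKn : (K:ℝ)/n ≤ ε/2 := by
      rw [div_le_div_iff₀ hnpos (by norm_num : (0:ℝ) < 2)]
      have h2 : ε * (2*(K:ℝ)*Real.sqrt ℓ) ≤ ε * n := mul_le_mul_of_nonneg_left hK hε0.le
      have h4 : ε * (2*(K:ℝ)*Real.sqrt ℓ) = 2*(K:ℝ) := by
        rw [hεdef]; field_simp
      linarith
    -- inclusion into the concentration event
    have hincl : A k ⊆ {ω | (k:ℝ) * (ε/2)
        ≤ |(∑ i ∈ Finset.Icc 1 k, B n i ω) - m|} := by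
      intro ω hω
      simp only [hAdef, Set.mem_setOf_eq] at hω ⊢
      set S : ℝ := ∑ i ∈ Finset.Icc 1 k, B n i ω with hSdef
      rw [hPi] at hω
      have h1 : |m/k - (n*I)/k| ≤ (K:ℝ)/n := by
        rw [div_sub_div_same, abs_div, abs_of_pos hkpos, div_le_iff₀ hkpos]
        calc |m - n*I| ≤ k * K / n := hbias
          _ = (K:ℝ)/n * k := by ring
      have htri : |S/k - (n*I)/k| ≤ |S/k - m/k| + |m/k - (n*I)/k| := abs_sub_le _ _ _
      have h2 : ε/2 < |S/k - m/k| := by linarith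
      rw [div_sub_div_same, abs_div, abs_of_pos hkpos] at h2
      rw [lt_div_iff₀ hkpos] at h2
      linarith [h2]
    -- concentration
    have hcard : ((Finset.Icc 1 k).card : ℝ) = (k:ℝ) := by
      rw [Nat.card_Icc]
      push_cast
      ring
    have htail := bern_sum_tail μ (fun i => B n i) (hmeas n) (hval n) (hindep n)
      (fun i => pf ((i : ℝ) / n)) (Finset.Icc 1 k)
      (fun i hi => by
        rw [Finset.mem_Icc] at hi
        refine (hpfmap _ ⟨by positivity, ?_⟩).1
        rw [div_le_one hnpos]
        exact_mod_cast le_trans hi.2 hkn)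
      (fun i hi => by
        rw [Finset.mem_Icc] at hi
        refine (hpfmap _ ⟨by positivity, ?_⟩).2
        rw [div_le_one hnpos]
        exact_mod_cast le_trans hi.2 hkn)
      (fun i hi => hbern n i (Finset.mem_Icc.mpr
        ⟨(Finset.mem_Icc.mp hi).1, le_trans (Finset.mem_Icc.mp hi).2 hkn⟩))
      (ε/2) (by positivity)
    rw [hcard] at htail
    have hε2 : ε^2 = 1/ℓ := by rw [hεdef, div_pow, one_pow, hsq]
    have hexp' : (ε/2)^2/2 = c := by
      rw [div_pow, hε2, hcdef]; ring
    have hexp : -(k:ℝ) * (ε/2)^2 / 2 = -(k:ℝ) * c := by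
      rw [← hexp']; ring
    rw [hexp] at htail
    calc μ (A k) ≤ μ {ω | (k:ℝ) * (ε/2)
          ≤ |(∑ i ∈ Finset.Icc 1 k, B n i ω) - m|} := measure_mono hincl
      _ ≤ ENNReal.ofReal (2 * Real.exp (-(k:ℝ) * c)) := by
          rw [ENNReal.le_ofReal_iff_toReal_le (measure_ne_top μ _) (by positivity)]
          exact htail
  -- union bound and geometric sum
  have hgeom : ∑ k ∈ Finset.Icc a n, (2 * Real.exp (-(k:ℝ) * c))
      ≤ 32 * ℓ * Real.exp (-(ℓ / 8)) := by
    set r : ℝ := Real.exp (-c) with hrdef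
    have hr0 : 0 < r := Real.exp_pos _
    have hr1 : r < 1 := Real.exp_lt_one_iff.mpr (by linarith)
    have hterm : ∀ k : ℕ, Real.exp (-(k:ℝ) * c) = r ^ k := by
      intro k
      rw [hrdef, ← Real.exp_nat_mul]
      congr 1
      ring
    have hsum1 : ∑ k ∈ Finset.Icc a n, r ^ k ≤ r ^ a * (1 - r)⁻¹ := by
      rw [← Finset.Ico_add_one_right_eq_Icc, Finset.sum_Ico_eq_sum_range]
      have : ∀ i ∈ Finset.range (n + 1 - a), r ^ (a + i) = r ^ a * r ^ i := fun i _ => pow_add r a i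
      rw [Finset.sum_congr rfl this, ← Finset.mul_sum]
      apply mul_le_mul_of_nonneg_left _ (pow_nonneg hr0.le a)
      calc ∑ i ∈ Finset.range (n + 1 - a), r ^ i
          ≤ ∑' i : ℕ, r ^ i := Summable.sum_le_tsum _ (fun i _ => pow_nonneg hr0.le i)
            (summable_geometric_of_lt_one hr0.le hr1)
        _ = (1 - r)⁻¹ := tsum_geometric_of_lt_one hr0.le hr1
    have hra : r ^ a ≤ Real.exp (-(ℓ / 8)) := by
      rw [hrdef, ← Real.exp_nat_mul, Real.exp_le_exp]
      have hceil : ℓ^2 ≤ (a:ℝ) := Nat.le_ceil _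
      have : ℓ^2 * c = ℓ / 8 := by
        rw [hcdef]
        field_simp
      nlinarith [hceil, hc0]
    have hinv : (1 - r)⁻¹ ≤ 16 * ℓ := by
      have hkey : r * Real.exp c = 1 := by rw [hrdef, ← Real.exp_add]; simp
      have h3 : r * c ≤ 1 - r := by nlinarith [Real.add_one_le_exp c, hr0.le]
      have h1r : 1 - c ≤ r := by nlinarith [Real.add_one_le_exp (-c)]
      have h4 : c / 2 ≤ 1 - r := by nlinarith
      have h5 : (1 - r)⁻¹ ≤ (c / 2)⁻¹ := by
        apply inv_anti₀ (by positivity) h4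
      refine h5.trans ?_
      have hcv : (c/2)⁻¹ = 16 * ℓ := by
        rw [hcdef]
        rw [div_div, one_div, inv_inv]
        ring
      rw [hcv]
    calc ∑ k ∈ Finset.Icc a n, (2 * Real.exp (-(k:ℝ) * c))
        = 2 * ∑ k ∈ Finset.Icc a n, r ^ k := by
          rw [Finset.mul_sum]
          exact Finset.sum_congr rfl fun k _ => by rw [hterm k]
      _ ≤ 2 * (r ^ a * (1 - r)⁻¹) := by linarith [hsum1]
      _ ≤ 2 * (Real.exp (-(ℓ / 8)) * (16 * ℓ)) := by
          apply mul_le_mul_of_nonneg_left _ (by norm_num)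
          apply mul_le_mul hra hinv (inv_nonneg.mpr (by linarith)) (Real.exp_pos _).le
      _ = 32 * ℓ * Real.exp (-(ℓ / 8)) := by ring
  calc μ ({ω | ∀ k : ℕ, a ≤ k → k ≤ n →
        |(∑ i ∈ Finset.Icc 1 k, B n i ω) / k
            - (∫ u in (0 : ℝ)..((k : ℝ) / n), pf u) / ((k : ℝ) / n)| ≤ ε})ᶜ
      ≤ μ (⋃ k ∈ Finset.Icc a n, A k) := measure_mono hsub
    _ ≤ ∑ k ∈ Finset.Icc a n, μ (A k) := measure_biUnion_finset_le _ _
    _ ≤ ∑ k ∈ Finset.Icc a n, ENNReal.ofReal (2 * Real.exp (-(k:ℝ) * c)) :=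
        Finset.sum_le_sum hAk
    _ = ENNReal.ofReal (∑ k ∈ Finset.Icc a n, (2 * Real.exp (-(k:ℝ) * c))) :=
        (ENNReal.ofReal_sum_of_nonneg fun k _ => by positivity).symm
    _ ≤ ENNReal.ofReal (32 * ℓ * Real.exp (-(ℓ / 8))) := ENNReal.ofReal_le_ofReal hgeom


/-- Uniform law of large numbers for the non-null proportions in the VCT model: if for each
`n` the indicators `B n 1, …, B n n` are independent with `B n i ~ Bernoulli(π(i/n))`,
`π : [0,1] → [0,1]` Lipschitz, `Π(t) = (1/t)∫₀ᵗ π`, `aₙ = ⌈(log n)²⌉`, `εₙ = 1/√(log n)`,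
then `P(max_{aₙ ≤ k ≤ n} |(1/k)∑_{i=1}^k B n i - Π(k/n)| ≤ εₙ) → 1`. -/
theorem vct_nonnull_proportion_uniform_lln {Ω : Type*} [MeasurableSpace Ω]
    (μ : Measure Ω) [IsProbabilityMeasure μ]
    (B : ℕ → ℕ → Ω → ℝ) (pf : ℝ → ℝ) (K : NNReal)
    (hpfmap : ∀ t ∈ Set.Icc (0 : ℝ) 1, pf t ∈ Set.Icc (0 : ℝ) 1)
    (hpflip : LipschitzOnWith K pf (Set.Icc (0 : ℝ) 1))
    (hmeas : ∀ n i, Measurable (B n i))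
    (hval : ∀ n i ω, B n i ω = 0 ∨ B n i ω = 1)
    (hbern : ∀ n : ℕ, ∀ i ∈ Finset.Icc 1 n,
      μ {ω | B n i ω = 1} = ENNReal.ofReal (pf ((i : ℝ) / n)))
    (hindep : ∀ n : ℕ, iIndepFun (fun i : ℕ => B n i) μ) :
    Tendsto (fun n : ℕ =>
      μ {ω | ∀ k : ℕ, ⌈(Real.log n) ^ 2⌉₊ ≤ k → k ≤ n →
        |(∑ i ∈ Finset.Icc 1 k, B n i ω) / k
            - (∫ u in (0 : ℝ)..((k : ℝ) / n), pf u) / ((k : ℝ) / n)|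
          ≤ 1 / Real.sqrt (Real.log n)})
      atTop (nhds 1) := by
  set f : ℕ → ℝ := fun n => 32 * Real.log n * Real.exp (-(Real.log n / 8)) with hfdef
  -- the real bound tends to 0
  have hlog : Tendsto (fun n : ℕ => Real.log n) atTop atTop :=
    Real.tendsto_log_atTop.comp tendsto_natCast_atTop_atTop
  have hg : Tendsto (fun x : ℝ => 32 * x * Real.exp (-(x / 8))) atTop (nhds 0) := by
    have h1 : Tendsto (fun x : ℝ => x ^ 1 * Real.exp (-x)) atTop (nhds 0) :=
      Real.tendsto_pow_mul_exp_neg_atTop_nhds_zero 1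
    have h2 : Tendsto (fun x : ℝ => x / 8) atTop atTop :=
      tendsto_id.atTop_div_const (by norm_num)
    have h3 : Tendsto (fun x : ℝ => (x / 8) ^ 1 * Real.exp (-(x / 8))) atTop (nhds 0) :=
      h1.comp h2
    have h4 : Tendsto (fun x : ℝ => 256 * ((x / 8) ^ 1 * Real.exp (-(x / 8))))
        atTop (nhds (256 * 0)) := h3.const_mul 256
    rw [mul_zero] at h4
    refine h4.congr fun x => ?_
    ring
  have hf0 : Tendsto f atTop (nhds 0) := hg.comp hlog
  have hofReal : Tendsto (fun n => ENNReal.ofReal (f n)) atTop (nhds 0) := by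
    have := ENNReal.tendsto_ofReal hf0
    simpa using this
  have hlower : Tendsto (fun n => 1 - ENNReal.ofReal (f n)) atTop (nhds 1) := by
    have := ENNReal.Tendsto.sub (tendsto_const_nhds : Tendsto (fun _ : ℕ => (1:ℝ≥0∞)) atTop (nhds 1))
      hofReal (Or.inl ENNReal.one_ne_top)
    simpa using this
  -- eventual facts
  have hev1 : ∀ᶠ n : ℕ in atTop, 1 ≤ Real.log n := hlog.eventually_ge_atTop 1
  have hev2 : ∀ᶠ n : ℕ in atTop, 2 * (K:ℝ) * Real.sqrt (Real.log n) ≤ n := by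
    filter_upwards [hev1, eventually_ge_atTop (⌈(2*(K:ℝ))^2⌉₊ + 1)] with n h1 h2
    have hn1 : 1 ≤ n := le_trans (Nat.le_add_left 1 _) h2
    have hn1' : (1:ℝ) ≤ n := by exact_mod_cast hn1
    have hlogn : Real.log n ≤ n :=
      (Real.log_le_sub_one_of_pos (by linarith)).trans (by linarith)
    have h2K : 2*(K:ℝ) ≤ Real.sqrt n := by
      have hc : ((2*(K:ℝ))^2) ≤ n := by
        refine le_trans (Nat.le_ceil _) ?_
        exact_mod_cast Nat.le_of_succ_le h2
      calc 2*(K:ℝ) = Real.sqrt ((2*(K:ℝ))^2) := (Real.sqrt_sq (by positivity)).symm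
        _ ≤ Real.sqrt n := Real.sqrt_le_sqrt hc
    calc 2*(K:ℝ)*Real.sqrt (Real.log n) ≤ 2*(K:ℝ)*Real.sqrt n := by
          apply mul_le_mul_of_nonneg_left (Real.sqrt_le_sqrt hlogn) (by positivity)
      _ ≤ Real.sqrt n * Real.sqrt n := mul_le_mul_of_nonneg_right h2K (Real.sqrt_nonneg _)
      _ = n := Real.mul_self_sqrt (by linarith)
  -- squeeze
  refine tendsto_of_tendsto_of_tendsto_of_le_of_le' hlower tendsto_const_nhds ?_
    (Eventually.of_forall fun n => prob_le_one)
  filter_upwards [hev1, hev2] with n h1 h2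
  set G : Set Ω := {ω | ∀ k : ℕ, ⌈(Real.log n) ^ 2⌉₊ ≤ k → k ≤ n →
      |(∑ i ∈ Finset.Icc 1 k, B n i ω) / k
          - (∫ u in (0 : ℝ)..((k : ℝ) / n), pf u) / ((k : ℝ) / n)|
        ≤ 1 / Real.sqrt (Real.log n)} with hGdef
  have hcompl : μ Gᶜ ≤ ENNReal.ofReal (f n) :=
    compl_bound μ B pf K hpfmap hpflip hmeas hval hbern hindep n h1 h2
  have hone : (1:ℝ≥0∞) ≤ μ G + μ Gᶜ := by
    calc (1:ℝ≥0∞) = μ Set.univ := (measure_univ (μ := μ)).symm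
      _ = μ (G ∪ Gᶜ) := by rw [Set.union_compl_self]
      _ ≤ μ G + μ Gᶜ := measure_union_le _ _
  calc 1 - ENNReal.ofReal (f n) ≤ 1 - μ Gᶜ := tsub_le_tsub_left hcompl 1
    _ ≤ μ G := by
        rw [tsub_le_iff_right]
        exact hone
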